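/- Let γ := (∏_{j=0}^{n} 1_{A_j}/π_j)·Y + Σ_{j=0}^{n} μ_j·(1 − 1_{A_j}/π_j)·∏_{k=0}^{j−1} 1_{A_k}/π_k be the doubly-robust (DR) pseudo-outcome. Then E[γ | 𝒢_0] = μ_0 P-almost surely; i.e., the conditional expectation of the DR pseudo-outcome given the initial history equals the conditional average potential outcome (Lemma on the conditional expectation of the DR pseudo-outcome, CAPO case). -/

import Mathlib

open MeasureTheory Finset

/-- **Lemma (conditional expectation of the DR pseudo-outcome, CAPO case).**
With a filtration `𝒢`, treatment events `A_j ∈ 𝒢_{j+1}`, `𝒢_j`-measurable propensities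
`π_j = E[1_{A_j} | 𝒢_j]` with `ε ≤ π_j ≤ 1` a.s., a bounded outcome `Y`, and bounded
`𝒢_j`-measurable response functions `μ_j` characterized recursively by
`E[1_{A_n}·Y | 𝒢_n] = π_n·μ_n` and `E[1_{A_j}·μ_{j+1} | 𝒢_j] = π_j·μ_j`,
the DR pseudo-outcome
`γ := (∏_{j=0}^{n} 1_{A_j}/π_j)·Y + Σ_{j=0}^{n} μ_j·(1 − 1_{A_j}/π_j)·∏_{k<j} 1_{A_k}/π_k`
satisfies `E[γ | 𝒢_0] = μ_0` P-almost surely. -/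
theorem DR_pseudo_outcome_condexp_CAPO
    {Ω : Type*} {F : MeasurableSpace Ω} {P : Measure Ω} [IsProbabilityMeasure P]
    (n : ℕ) (G : ℕ → MeasurableSpace Ω) (hG_mono : Monotone G) (hG_le : ∀ j, G j ≤ F)
    (A : ℕ → Set Ω) (hA : ∀ j ≤ n, MeasurableSet[G (j + 1)] (A j))
    (π : ℕ → Ω → ℝ) (hπ_meas : ∀ j ≤ n, Measurable[G j] (π j))
    (ε : ℝ) (hε : 0 < ε) (hπ_bd : ∀ j ≤ n, ∀ᵐ x ∂P, ε ≤ π j x ∧ π j x ≤ 1)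
    (hπ_ce : ∀ j ≤ n, π j =ᵐ[P] P[(A j).indicator (fun _ => (1 : ℝ)) | G j])
    (Y : Ω → ℝ) (hY_meas : Measurable Y) (CY : ℝ) (hY_bd : ∀ x, |Y x| ≤ CY)
    (μ : ℕ → Ω → ℝ) (hμ_meas : ∀ j ≤ n, Measurable[G j] (μ j))
    (Cμ : ℝ) (hμ_bd : ∀ j ≤ n, ∀ x, |μ j x| ≤ Cμ)
    (hμ_n : P[fun x => (A n).indicator (fun _ => (1 : ℝ)) x * Y x | G n]
        =ᵐ[P] fun x => π n x * μ n x)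
    (hμ_rec : ∀ j < n,
        P[fun x => (A j).indicator (fun _ => (1 : ℝ)) x * μ (j + 1) x | G j]
          =ᵐ[P] fun x => π j x * μ j x)
    (γ : Ω → ℝ)
    (hγ : γ = fun x =>
      (∏ j ∈ range (n + 1), (A j).indicator (fun _ => (1 : ℝ)) x / π j x) * Y x
      + ∑ j ∈ range (n + 1),
          μ j x * (1 - (A j).indicator (fun _ => (1 : ℝ)) x / π j x)
            * ∏ k ∈ range j, (A k).indicator (fun _ => (1 : ℝ)) x / π k x) :
    P[γ | G 0] =ᵐ[P] μ 0 := by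
  classical
  set I : ℕ → Ω → ℝ := fun k => (A k).indicator (fun _ => (1 : ℝ)) with hI_def
  set T : ℕ → Ω → ℝ := fun j x => ∏ k ∈ range j, I k x / π k x with hT_def
  set ν : ℕ → Ω → ℝ := fun j x => if j ≤ n then μ j x else Y x with hν_def
  have hPae : (Filter.NeBot (ae P)) := ae_neBot.mpr (IsProbabilityMeasure.ne_zero P)
  have hε1 : ε ≤ 1 := by
    obtain ⟨x, hx⟩ := (hπ_bd 0 (Nat.zero_le n)).exists
    linarith [hx.1, hx.2]
  have hεinv1 : (1 : ℝ) ≤ 1 / ε := by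
    rw [le_div_iff₀ hε]; simpa using hε1
  -- algebraic rewriting of γ
  have hTsucc : ∀ j x, T (j + 1) x = T j x * (I j x / π j x) := by
    intro j x; simp only [hT_def]; exact Finset.prod_range_succ _ _
  have key : γ = (fun x => μ 0 x) + ∑ j ∈ range (n + 1),
      (fun x => (T j x / π j x) * (I j x * (ν (j + 1) x - μ j x))) := by
    funext x
    rw [hγ]
    simp only [Pi.add_apply, Finset.sum_apply]
    show T (n + 1) x * Y x + ∑ j ∈ range (n + 1), μ j x * (1 - I j x / π j x) * T j x
        = μ 0 x + ∑ j ∈ range (n + 1), (T j x / π j x) * (I j x * (ν (j + 1) x - μ j x))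
    have e1 : ∀ j, (T j x / π j x) * (I j x * (ν (j + 1) x - μ j x))
        = ν (j + 1) x * T (j + 1) x - μ j x * T (j + 1) x := by
      intro j; rw [hTsucc j x]; ring
    have e2 : ∀ j, μ j x * (1 - I j x / π j x) * T j x
        = μ j x * T j x - μ j x * T (j + 1) x := by
      intro j; rw [hTsucc j x]; ring
    rw [Finset.sum_congr rfl fun j _ => e2 j, Finset.sum_congr rfl fun j _ => e1 j,
      Finset.sum_sub_distrib, Finset.sum_sub_distrib]
    have S1 : ∑ j ∈ range (n + 1), μ j x * T j x
        = (∑ j ∈ range n, μ (j + 1) x * T (j + 1) x) + μ 0 x * T 0 x :=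
      Finset.sum_range_succ' _ _
    have hT0 : T 0 x = 1 := by simp [hT_def]
    have S2 : ∑ j ∈ range (n + 1), ν (j + 1) x * T (j + 1) x
        = (∑ j ∈ range n, μ (j + 1) x * T (j + 1) x) + Y x * T (n + 1) x := by
      rw [Finset.sum_range_succ]
      congr 1
      · refine Finset.sum_congr rfl fun j hj => ?_
        have : j + 1 ≤ n := Nat.succ_le_of_lt (Finset.mem_range.mp hj)
        simp [hν_def, this]
      · have : ¬ (n + 1 ≤ n) := by omega
        simp [hν_def, this]
    rw [S1, hT0, S2]
    ring
  -- measurability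
  have hI_measG : ∀ k ≤ n, Measurable[G (k + 1)] (I k) := fun k hk =>
    measurable_const.indicator (hA k hk)
  have hd_measG : ∀ j, ∀ k ≤ n, k + 1 ≤ j → Measurable[G j] (fun x => I k x / π k x) :=
    fun j k hk hkj =>
      ((hI_measG k hk).mono (hG_mono hkj) le_rfl).div
        ((hπ_meas k hk).mono (hG_mono (by omega)) le_rfl)
  have hT_measG : ∀ j ≤ n + 1, Measurable[G j] (T j) := by
    intro j hj
    simp only [hT_def]
    exact Finset.measurable_prod (range j) fun k hk =>
      hd_measG j k (by have := Finset.mem_range.mp hk; omega)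
        (Nat.succ_le_of_lt (Finset.mem_range.mp hk))
  have hI_meas : ∀ k ≤ n, Measurable (I k) := fun k hk =>
    (hI_measG k hk).mono (hG_le _) le_rfl
  have hν_meas : ∀ j, Measurable (ν j) := by
    intro j
    simp only [hν_def]
    by_cases hj : j ≤ n
    · simp only [hj, if_true]; exact (hμ_meas j hj).mono (hG_le _) le_rfl
    · simp only [hj, if_false]; exact hY_meas
  -- a.e. bounds
  have hπ_ae : ∀ᵐ x ∂P, ∀ k, k ≤ n → ε ≤ π k x ∧ π k x ≤ 1 := by
    rw [ae_all_iff]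
    intro k
    by_cases hk : k ≤ n
    · filter_upwards [hπ_bd k hk] with x hx _ using hx
    · filter_upwards with x hk' using absurd hk' hk
  have hI_nonneg : ∀ k x, 0 ≤ I k x := by
    intro k x; simp only [hI_def]; exact Set.indicator_nonneg (fun _ _ => zero_le_one) x
  have hI_le_one : ∀ k x, I k x ≤ 1 := by
    intro k x; simp only [hI_def]
    by_cases h : x ∈ A k <;> simp [Set.indicator_apply, h]
  have hT_bd : ∀ᵐ x ∂P, ∀ j ≤ n + 1, |T j x| ≤ (1 / ε) ^ (n + 1) := by
    filter_upwards [hπ_ae] with x hx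
    intro j hj
    have hd_bd : ∀ k ≤ n, |I k x / π k x| ≤ 1 / ε := by
      intro k hk
      have h1 := (hx k hk).1
      have hπpos : 0 < π k x := lt_of_lt_of_le hε h1
      rw [abs_div, abs_of_nonneg (hI_nonneg k x), abs_of_pos hπpos]
      exact div_le_div₀ zero_le_one (hI_le_one k x) hε h1
    calc |T j x| ≤ ∏ k ∈ range j, |I k x / π k x| := by
          simp only [hT_def]; exact (Finset.abs_prod _ _).le
      _ ≤ ∏ k ∈ range j, (1 / ε) := by
          refine Finset.prod_le_prod (fun k _ => abs_nonneg _) fun k hk => ?_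
          exact hd_bd k (by have := Finset.mem_range.mp hk; omega)
      _ = (1 / ε) ^ j := by rw [Finset.prod_const, Finset.card_range]
      _ ≤ (1 / ε) ^ (n + 1) := pow_le_pow_right₀ hεinv1 hj
  have hν_bd : ∀ j x, |ν j x| ≤ |CY| + |Cμ| := by
    intro j x
    simp only [hν_def]
    by_cases hj : j ≤ n
    · simp only [hj, if_true]
      have := hμ_bd j hj x
      have := le_abs_self Cμ
      have := abs_nonneg CY
      linarith
    · simp only [hj, if_false]
      have := hY_bd x
      have := le_abs_self CY
      have := abs_nonneg Cμ
      linarith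
  -- integrability helper
  have hInt : ∀ (f : Ω → ℝ) (C : ℝ), Measurable f → (∀ᵐ x ∂P, |f x| ≤ C) →
      Integrable f P := fun f C hm hb =>
    (integrable_const C).mono' hm.aestronglyMeasurable
      (by simpa [Real.norm_eq_abs] using hb)
  set D : ℝ := |CY| + |Cμ| with hD_def
  have hD0 : 0 ≤ D := by positivity
  -- the per-term functions
  have term_zero : ∀ j, j ≤ n →
      Integrable (fun x => (T j x / π j x) * (I j x * (ν (j + 1) x - μ j x))) P ∧
      P[(fun x => (T j x / π j x) * (I j x * (ν (j + 1) x - μ j x))) | G 0] =ᵐ[P] 0 := by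
    intro j hjn
    have hjn1 : j ≤ n + 1 := by omega
    -- measurable pieces wrt G j
    have hFm : Measurable[G j] (fun x => T j x / π j x) :=
      (hT_measG j hjn1).div (hπ_meas j hjn)
    have hFm' : Measurable (fun x => T j x / π j x) := hFm.mono (hG_le j) le_rfl
    have hgm : Measurable (fun x => I j x * (ν (j + 1) x - μ j x)) :=
      (hI_meas j hjn).mul ((hν_meas (j + 1)).sub ((hμ_meas j hjn).mono (hG_le j) le_rfl))
    -- a.e. bounds
    have hg_bd : ∀ᵐ x ∂P, |I j x * (ν (j + 1) x - μ j x)| ≤ D + |Cμ| := by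
      filter_upwards with x
      rw [abs_mul]
      have h1 : |I j x| ≤ 1 := by
        rw [abs_of_nonneg (hI_nonneg j x)]; exact hI_le_one j x
      have h2 : |ν (j + 1) x - μ j x| ≤ D + |Cμ| := by
        have := hν_bd (j + 1) x
        have h3 : |μ j x| ≤ |Cμ| := le_trans (hμ_bd j hjn x) (le_abs_self Cμ)
        calc |ν (j + 1) x - μ j x| ≤ |ν (j + 1) x| + |μ j x| := abs_sub _ _
          _ ≤ D + |Cμ| := by linarith
      calc |I j x| * |ν (j + 1) x - μ j x| ≤ 1 * (D + |Cμ|) := by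
            apply mul_le_mul h1 h2 (abs_nonneg _) zero_le_one
        _ = D + |Cμ| := one_mul _
    have hF_bd : ∀ᵐ x ∂P, |T j x / π j x| ≤ (1 / ε) ^ (n + 1) * (1 / ε) := by
      filter_upwards [hπ_ae, hT_bd] with x hx hTx
      have h1 := (hx j hjn).1
      have hπpos : 0 < π j x := lt_of_lt_of_le hε h1
      rw [abs_div, abs_of_pos hπpos]
      calc |T j x| / π j x ≤ (1 / ε) ^ (n + 1) / ε := by
            apply div_le_div₀ (by positivity) (hTx j hjn1) hε h1
        _ = (1 / ε) ^ (n + 1) * (1 / ε) := by rw [div_eq_mul_one_div]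
    have hint_g : Integrable (fun x => I j x * (ν (j + 1) x - μ j x)) P :=
      hInt _ _ hgm hg_bd
    have hint_Fg :
        Integrable (fun x => (T j x / π j x) * (I j x * (ν (j + 1) x - μ j x))) P := by
      refine hInt _ ((1 / ε) ^ (n + 1) * (1 / ε) * (D + |Cμ|)) (hFm'.mul hgm) ?_
      filter_upwards [hF_bd, hg_bd] with x h1 h2
      rw [abs_mul]
      apply mul_le_mul h1 h2 (abs_nonneg _) (by positivity)
    -- conditional expectation computations
    have h1 : P[(fun x => I j x * ν (j + 1) x) | G j] =ᵐ[P] fun x => π j x * μ j x := by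
      rcases eq_or_lt_of_le hjn with rfl | hlt
      · have he : (fun x => I j x * ν (j + 1) x)
            = fun x => (A j).indicator (fun _ => (1 : ℝ)) x * Y x := by
          funext x
          have : ¬ (j + 1 ≤ j) := by omega
          simp [hI_def, hν_def, this]
        rw [he]; exact hμ_n
      · have he : (fun x => I j x * ν (j + 1) x)
            = fun x => (A j).indicator (fun _ => (1 : ℝ)) x * μ (j + 1) x := by
          funext x
          have : j + 1 ≤ n := Nat.succ_le_of_lt hlt
          simp [hI_def, hν_def, this]
        rw [he]; exact hμ_rec j hlt
    have hint_I : Integrable (I j) P := by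
      refine hInt _ 1 (hI_meas j hjn) ?_
      filter_upwards with x
      rw [abs_of_nonneg (hI_nonneg j x)]; exact hI_le_one j x
    have hint_μI : Integrable ((μ j) * (I j)) P := by
      refine hInt _ |Cμ| (((hμ_meas j hjn).mono (hG_le j) le_rfl).mul (hI_meas j hjn)) ?_
      filter_upwards with x
      rw [Pi.mul_apply, abs_mul]
      calc |μ j x| * |I j x| ≤ |Cμ| * 1 := by
            apply mul_le_mul (le_trans (hμ_bd j hjn x) (le_abs_self Cμ)) ?_
              (abs_nonneg _) (abs_nonneg _)
            rw [abs_of_nonneg (hI_nonneg j x)]; exact hI_le_one j x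
        _ = |Cμ| := mul_one _
    have h2 : P[(fun x => I j x * μ j x) | G j] =ᵐ[P] fun x => μ j x * π j x := by
      have he : (fun x => I j x * μ j x) = (μ j) * (I j) := by
        funext x; rw [Pi.mul_apply]; ring
      rw [he]
      refine (condExp_mul_of_stronglyMeasurable_left
        ((hμ_meas j hjn).stronglyMeasurable) hint_μI hint_I).trans ?_
      have := (hπ_ce j hjn).symm
      filter_upwards [this] with x hx
      rw [Pi.mul_apply, hx]
    have hνint : Integrable (fun x => I j x * ν (j + 1) x) P := by
      refine hInt _ D ((hI_meas j hjn).mul (hν_meas (j + 1))) ?_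
      filter_upwards with x
      rw [abs_mul]
      calc |I j x| * |ν (j + 1) x| ≤ 1 * D := by
            apply mul_le_mul ?_ (hν_bd (j + 1) x) (abs_nonneg _) zero_le_one
            rw [abs_of_nonneg (hI_nonneg j x)]; exact hI_le_one j x
        _ = D := one_mul _
    have hμIint : Integrable (fun x => I j x * μ j x) P := by
      have he : (fun x => I j x * μ j x) = (μ j) * (I j) := by
        funext x; rw [Pi.mul_apply]; ring
      rw [he]; exact hint_μI
    have hg0 : P[(fun x => I j x * (ν (j + 1) x - μ j x)) | G j] =ᵐ[P] 0 := by
      have he : (fun x => I j x * (ν (j + 1) x - μ j x))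
          = (fun x => I j x * ν (j + 1) x) - (fun x => I j x * μ j x) := by
        funext x; rw [Pi.sub_apply]; ring
      rw [he]
      refine (condExp_sub hνint hμIint (G j)).trans ?_
      filter_upwards [h1, h2] with x hx1 hx2
      rw [Pi.sub_apply, hx1, hx2, Pi.zero_apply]
      ring
    have hmul : P[(fun x => (T j x / π j x) * (I j x * (ν (j + 1) x - μ j x))) | G j]
        =ᵐ[P] (fun x => T j x / π j x) * P[(fun x => I j x * (ν (j + 1) x - μ j x)) | G j] :=
      condExp_mul_of_stronglyMeasurable_left hFm.stronglyMeasurable hint_Fg hint_g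
    have hzero_j : P[(fun x => (T j x / π j x) * (I j x * (ν (j + 1) x - μ j x))) | G j]
        =ᵐ[P] 0 := by
      refine hmul.trans ?_
      filter_upwards [hg0] with x hx
      rw [Pi.mul_apply, hx, Pi.zero_apply, mul_zero]
    refine ⟨hint_Fg, ?_⟩
    calc P[(fun x => (T j x / π j x) * (I j x * (ν (j + 1) x - μ j x))) | G 0]
        =ᵐ[P] P[P[(fun x => (T j x / π j x) * (I j x * (ν (j + 1) x - μ j x))) | G j] | G 0] :=
          (condExp_condExp_of_le (hG_mono (Nat.zero_le j)) (hG_le j)).symm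
      _ =ᵐ[P] P[(0 : Ω → ℝ) | G 0] := condExp_congr_ae hzero_j
      _ =ᵐ[P] 0 := by rw [condExp_zero]
  -- assemble
  have hint_term : ∀ j ∈ range (n + 1),
      Integrable (fun x => (T j x / π j x) * (I j x * (ν (j + 1) x - μ j x))) P :=
    fun j hj => (term_zero j (Nat.lt_succ_iff.mp (Finset.mem_range.mp hj))).1
  have hint_μ0 : Integrable (μ 0) P := by
    refine hInt _ |Cμ| ((hμ_meas 0 (Nat.zero_le n)).mono (hG_le 0) le_rfl) ?_
    filter_upwards with x
    exact le_trans (hμ_bd 0 (Nat.zero_le n) x) (le_abs_self Cμ)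
  have hsum_int : Integrable
      (∑ j ∈ range (n + 1), (fun x => (T j x / π j x) * (I j x * (ν (j + 1) x - μ j x)))) P := by
    rw [Finset.sum_fn]
    exact integrable_finset_sum _ hint_term
  have hμ0eta : (fun x => μ 0 x) = μ 0 := rfl
  calc P[γ | G 0]
      = P[(μ 0) + ∑ j ∈ range (n + 1),
          (fun x => (T j x / π j x) * (I j x * (ν (j + 1) x - μ j x))) | G 0] := by
        rw [key, hμ0eta]
    _ =ᵐ[P] P[μ 0 | G 0] + P[∑ j ∈ range (n + 1),
          (fun x => (T j x / π j x) * (I j x * (ν (j + 1) x - μ j x))) | G 0] :=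
        condExp_add hint_μ0 hsum_int (G 0)
    _ =ᵐ[P] μ 0 + P[∑ j ∈ range (n + 1),
          (fun x => (T j x / π j x) * (I j x * (ν (j + 1) x - μ j x))) | G 0] := by
        rw [condExp_of_stronglyMeasurable (hG_le 0)
          ((hμ_meas 0 (Nat.zero_le n)).stronglyMeasurable) hint_μ0]
    _ =ᵐ[P] μ 0 + ∑ j ∈ range (n + 1),
          P[(fun x => (T j x / π j x) * (I j x * (ν (j + 1) x - μ j x))) | G 0] :=
        Filter.EventuallyEq.add (Filter.EventuallyEq.refl _ _) (condExp_finset_sum hint_term (G 0))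
    _ =ᵐ[P] μ 0 := by
        have hall : ∀ᵐ x ∂P, ∀ j ∈ range (n + 1),
            (P[(fun x => (T j x / π j x) * (I j x * (ν (j + 1) x - μ j x))) | G 0]) x = 0 := by
          rw [Filter.eventually_all_finset]
          intro j hj
          have := (term_zero j (Nat.lt_succ_iff.mp (Finset.mem_range.mp hj))).2
          filter_upwards [this] with x hx using hx
        filter_upwards [hall] with x hx
        rw [Pi.add_apply, Finset.sum_apply, Finset.sum_eq_zero hx, add_zero]
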